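/- Under the hypotheses of the previous statement (nudged equilibria s_β solving ∇ₛE(s_β, θ) + β∇ℓ(s_β) = 0, with β ↦ s_β differentiable at 0 and ∇²ₛE(s₀, θ) invertible), the equilibrium-propagation gradient estimate converges to the true loss gradient: d/dβ [∇_θ E(s_β, θ)] |_{β=0} = d_θ ℓ(s⋆(θ)), where s⋆(θ) := s₀ is the free equilibrium depending implicitly on θ via the implicit function theorem. -/

import Mathlib

open scoped RealInnerProductSpace

noncomputable section

abbrev Euc (n : ℕ) := EuclideanSpace ℝ (Fin n)

lemma gradient_eq_toDual_symm {m : ℕ} (f : Euc m → ℝ) (x : Euc m) :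
    gradient f x = (InnerProductSpace.toDual ℝ (Euc m)).symm (fderiv ℝ f x) := rfl

lemma inner_gradient_aux {m : ℕ} (f : Euc m → ℝ) (x v : Euc m) :
    ⟪gradient f x, v⟫ = fderiv ℝ f x v :=
  InnerProductSpace.toDual_symm_apply

set_option maxHeartbeats 1000000 in
/-- Fundamental theorem of Equilibrium Propagation: the EP gradient
estimate converges to the true loss gradient,
`d/dβ [∇_θ E(s_β, θ)]|_{β=0} = d_θ ℓ(s⋆(θ))`. -/
theorem stmt_4 {n p : ℕ}
    (E : Euc n → Euc p → ℝ) (hE : ContDiff ℝ 2 (Function.uncurry E))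
    (ℓ : Euc n → ℝ) (hℓ : ContDiff ℝ 2 ℓ)
    (θ : Euc p)
    (sstar : Euc p → Euc n) (hsstar : ContDiff ℝ 1 sstar)
    (V : Set (Euc p)) (hV : IsOpen V) (hθV : θ ∈ V)
    (hfree : ∀ θ' ∈ V, gradient (fun s' => E s' θ') (sstar θ') = 0)
    (s : ℝ → Euc n) (hs : ContDiff ℝ 1 s) (hs0 : s 0 = sstar θ)
    (ε : ℝ) (hε : 0 < ε)
    (hnudge : ∀ β ∈ Set.Ioo (-ε) ε,
      gradient (fun s' => E s' θ) (s β) + β • gradient ℓ (s β) = 0)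
    (hHinv : Function.Bijective
      (fderiv ℝ (fun s' => gradient (fun s'' => E s'' θ) s') (sstar θ))) :
    deriv (fun β => gradient (fun θ' => E (s β) θ') θ) 0 =
      gradient (fun θ' => ℓ (sstar θ')) θ := by
  classical
  set s₀ : Euc n := sstar θ with hs₀
  set F : Euc n × Euc p → ℝ := Function.uncurry E with hFdef
  have hFd : Differentiable ℝ F := hE.differentiable (by norm_num)
  set Φ : Euc n × Euc p → (Euc n × Euc p) →L[ℝ] ℝ := fderiv ℝ F with hΦdef
  have hΦc : ContDiff ℝ 1 Φ := hE.fderiv_right (by norm_num)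
  have hΦd : DifferentiableAt ℝ Φ (s₀, θ) := (hΦc.differentiable (by norm_num)) _
  set B : (Euc n × Euc p) →L[ℝ] (Euc n × Euc p) →L[ℝ] ℝ := fderiv ℝ Φ (s₀, θ) with hBdef
  have hBsymm : ∀ x y, B x y = B y x :=
    second_derivative_symmetric (fun y => (hFd y).hasFDerivAt) hΦd.hasFDerivAt
  -- partial derivatives
  have hpart_left : ∀ x : Euc n × Euc p, fderiv ℝ (fun s' => E s' x.2) x.1
      = (Φ x).comp (ContinuousLinearMap.inl ℝ (Euc n) (Euc p)) := by
    rintro ⟨a, b⟩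
    exact ((hFd (a, b)).hasFDerivAt.comp a (hasFDerivAt_prodMk_left (𝕜 := ℝ) a b)).fderiv
  have hpart_right : ∀ x : Euc n × Euc p, fderiv ℝ (fun θ' => E x.1 θ') x.2
      = (Φ x).comp (ContinuousLinearMap.inr ℝ (Euc n) (Euc p)) := by
    rintro ⟨a, b⟩
    exact ((hFd (a, b)).hasFDerivAt.comp b (hasFDerivAt_prodMk_right (𝕜 := ℝ) a b)).fderiv
  -- the gradient-valued maps
  set Ψ : Euc n × Euc p → Euc n := fun x =>
    (InnerProductSpace.toDual ℝ (Euc n)).symm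
      ((Φ x).comp (ContinuousLinearMap.inl ℝ (Euc n) (Euc p))) with hΨdef
  set Γ : Euc n × Euc p → Euc p := fun x =>
    (InnerProductSpace.toDual ℝ (Euc p)).symm
      ((Φ x).comp (ContinuousLinearMap.inr ℝ (Euc n) (Euc p))) with hΓdef
  have hΨeq : ∀ a b, gradient (fun s' => E s' b) a = Ψ (a, b) := by
    intro a b
    rw [gradient_eq_toDual_symm, hpart_left (a, b)]
  have hΓeq : ∀ a b, gradient (fun θ' => E a θ') b = Γ (a, b) := by
    intro a b
    rw [gradient_eq_toDual_symm, hpart_right (a, b)]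
  -- derivatives of Ψ and Γ
  set cl : ((Euc n × Euc p) →L[ℝ] ℝ) →L[ℝ] (Euc n →L[ℝ] ℝ) :=
    (ContinuousLinearMap.compL ℝ (Euc n) (Euc n × Euc p) ℝ).flip
      (ContinuousLinearMap.inl ℝ (Euc n) (Euc p)) with hcl
  set cr : ((Euc n × Euc p) →L[ℝ] ℝ) →L[ℝ] (Euc p →L[ℝ] ℝ) :=
    (ContinuousLinearMap.compL ℝ (Euc p) (Euc n × Euc p) ℝ).flip
      (ContinuousLinearMap.inr ℝ (Euc n) (Euc p)) with hcr
  set en : (Euc n →L[ℝ] ℝ) →L[ℝ] Euc n :=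
    ((InnerProductSpace.toDual ℝ (Euc n)).symm.toContinuousLinearEquiv :
      (Euc n →L[ℝ] ℝ) ≃L[ℝ] Euc n).toContinuousLinearMap with hen
  set ep : (Euc p →L[ℝ] ℝ) →L[ℝ] Euc p :=
    ((InnerProductSpace.toDual ℝ (Euc p)).symm.toContinuousLinearEquiv :
      (Euc p →L[ℝ] ℝ) ≃L[ℝ] Euc p).toContinuousLinearMap with hep
  have hΨfun : Ψ = fun x => en (cl (Φ x)) := by
    funext x; simp [hΨdef, hen, hcl]
  have hΓfun : Γ = fun x => ep (cr (Φ x)) := by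
    funext x; simp [hΓdef, hep, hcr]
  have hDΨ : HasFDerivAt Ψ ((en.comp cl).comp B) (s₀, θ) := by
    rw [hΨfun]
    exact ((en.comp cl).hasFDerivAt.comp _ hΦd.hasFDerivAt)
  have hDΓ : HasFDerivAt Γ ((ep.comp cr).comp B) (s₀, θ) := by
    rw [hΓfun]
    exact ((ep.comp cr).hasFDerivAt.comp _ hΦd.hasFDerivAt)
  have hDΨapp : ∀ w, ((en.comp cl).comp B) w
      = (InnerProductSpace.toDual ℝ (Euc n)).symm
          ((B w).comp (ContinuousLinearMap.inl ℝ (Euc n) (Euc p))) := by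
    intro w; simp [hen, hcl]
  have hDΓapp : ∀ w, ((ep.comp cr).comp B) w
      = (InnerProductSpace.toDual ℝ (Euc p)).symm
          ((B w).comp (ContinuousLinearMap.inr ℝ (Euc n) (Euc p))) := by
    intro w; simp [hep, hcr]
  -- derivative of s at 0 and of sstar at θ
  set v₀ : Euc n := deriv s 0 with hv₀
  have hsd : HasDerivAt s v₀ 0 := ((hs.differentiable (by norm_num)) 0).hasDerivAt
  set J : Euc p →L[ℝ] Euc n := fderiv ℝ sstar θ with hJ
  have hJd : HasFDerivAt sstar J θ := ((hsstar.differentiable (by norm_num)) θ).hasFDerivAt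
  -- Key 1: differentiating the free condition
  have key1 : ∀ u : Euc p, ∀ v : Euc n, B (J u, u) (v, 0) = 0 := by
    have hq : HasFDerivAt (fun θ' => Ψ (sstar θ', θ'))
        (((en.comp cl).comp B).comp (J.prod (ContinuousLinearMap.id ℝ (Euc p)))) θ := by
      have hpair : HasFDerivAt (fun θ' => ((sstar θ', θ') : Euc n × Euc p))
          (J.prod (ContinuousLinearMap.id ℝ (Euc p))) θ := hJd.prodMk (hasFDerivAt_id θ)
      exact HasFDerivAt.comp (f := fun θ' => ((sstar θ', θ') : Euc n × Euc p)) θ hDΨ hpair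
    have hq0 : (fun θ' => Ψ (sstar θ', θ')) =ᶠ[nhds θ] fun _ => (0 : Euc n) := by
      filter_upwards [hV.mem_nhds hθV] with θ' hθ'
      rw [← hΨeq]; exact hfree θ' hθ'
    have hfz : (((en.comp cl).comp B).comp (J.prod (ContinuousLinearMap.id ℝ (Euc p)))) = 0 := by
      have h1 := hq.fderiv
      have h2 : fderiv ℝ (fun θ' => Ψ (sstar θ', θ')) θ
          = fderiv ℝ (fun _ : Euc p => (0 : Euc n)) θ := hq0.fderiv_eq
      rw [h1, fderiv_fun_const] at h2
      simpa using h2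
    intro u v
    have h3 : ((en.comp cl).comp B) (J u, u) = 0 := by
      have := congrArg (fun (L : Euc p →L[ℝ] Euc n) => L u) hfz
      simpa using this
    rw [hDΨapp] at h3
    have h4 : (B (J u, u)).comp (ContinuousLinearMap.inl ℝ (Euc n) (Euc p)) = 0 := by
      have := congrArg (InnerProductSpace.toDual ℝ (Euc n)) h3
      simpa using this
    have := congrArg (fun (L : Euc n →L[ℝ] ℝ) => L v) h4
    simpa using this
  -- Key 2: differentiating the nudged condition
  have key2 : ∀ w : Euc n, B (v₀, 0) (w, 0) + ⟪gradient ℓ s₀, w⟫ = 0 := by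
    have hglc : ContDiff ℝ 1 (gradient ℓ) := by
      have : ContDiff ℝ 1 (fderiv ℝ ℓ) := hℓ.fderiv_right (by norm_num)
      exact ((InnerProductSpace.toDual ℝ (Euc n)).symm.contDiff).comp this
    have hgls : HasDerivAt (fun β => gradient ℓ (s β))
        (fderiv ℝ (gradient ℓ) (s 0) v₀) 0 :=
      HasFDerivAt.comp_hasDerivAt (f := s) 0
        (((hglc.differentiable (by norm_num)) (s 0)).hasFDerivAt) hsd
    have hterm2 : HasDerivAt (fun β : ℝ => β • gradient ℓ (s β))
        (gradient ℓ s₀) 0 := by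
      have := (hasDerivAt_id (0:ℝ)).fun_smul hgls
      simpa [hs0] using this
    have hterm1 : HasDerivAt (fun β => Ψ (s β, θ))
        (((en.comp cl).comp B) (v₀, 0)) 0 := by
      have hpair : HasDerivAt (fun β => ((s β, θ) : Euc n × Euc p)) ((v₀, 0) : Euc n × Euc p) 0 :=
        hsd.prodMk (hasDerivAt_const 0 θ)
      have hDΨ' : HasFDerivAt Ψ ((en.comp cl).comp B) (s 0, θ) := by rw [hs0]; exact hDΨ
      exact HasFDerivAt.comp_hasDerivAt (f := fun β => ((s β, θ) : Euc n × Euc p)) 0 hDΨ' hpair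
    have hr : HasDerivAt (fun β => Ψ (s β, θ) + β • gradient ℓ (s β))
        (((en.comp cl).comp B) (v₀, 0) + gradient ℓ s₀) 0 := hterm1.add hterm2
    have hr0 : (fun β => Ψ (s β, θ) + β • gradient ℓ (s β)) =ᶠ[nhds (0:ℝ)]
        fun _ => (0 : Euc n) := by
      filter_upwards [Ioo_mem_nhds (neg_lt_zero.mpr hε) hε] with β hβ
      rw [← hΨeq]; exact hnudge β hβ
    have hz : ((en.comp cl).comp B) (v₀, 0) + gradient ℓ s₀ = 0 := by
      have h1 := hr.deriv
      have h2 : deriv (fun β => Ψ (s β, θ) + β • gradient ℓ (s β)) 0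
          = deriv (fun _ : ℝ => (0 : Euc n)) 0 := hr0.deriv_eq
      rw [h1, deriv_const] at h2
      exact h2
    intro w
    have := congrArg (fun z => ⟪z, w⟫) hz
    simp only [inner_add_left, inner_zero_left] at this
    rw [hDΨapp] at this
    rw [InnerProductSpace.toDual_symm_apply] at this
    simpa using this
  -- LHS computation
  have hLHS : deriv (fun β => gradient (fun θ' => E (s β) θ') θ) 0
      = ((ep.comp cr).comp B) (v₀, 0) := by
    have heq : (fun β => gradient (fun θ' => E (s β) θ') θ) = fun β => Γ (s β, θ) := by
      funext β; exact hΓeq (s β) θ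
    rw [heq]
    have hpair : HasDerivAt (fun β => ((s β, θ) : Euc n × Euc p)) ((v₀, 0) : Euc n × Euc p) 0 :=
      hsd.prodMk (hasDerivAt_const 0 θ)
    have hDΓ' : HasFDerivAt Γ ((ep.comp cr).comp B) (s 0, θ) := by rw [hs0]; exact hDΓ
    exact (HasFDerivAt.comp_hasDerivAt (f := fun β => ((s β, θ) : Euc n × Euc p)) 0 hDΓ' hpair).deriv
  rw [hLHS]
  -- conclude by comparing inner products
  apply ext_inner_right ℝ
  intro u
  have hLu : ⟪((ep.comp cr).comp B) (v₀, 0), u⟫ = B (v₀, 0) (0, u) := by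
    rw [hDΓapp, InnerProductSpace.toDual_symm_apply]
    simp
  have hRu : ⟪gradient (fun θ' => ℓ (sstar θ')) θ, u⟫ = ⟪gradient ℓ s₀, J u⟫ := by
    rw [inner_gradient_aux]
    have hcomp : fderiv ℝ (fun θ' => ℓ (sstar θ')) θ = (fderiv ℝ ℓ s₀).comp J := by
      exact (((hℓ.differentiable (by norm_num)) s₀).hasFDerivAt.comp θ hJd).fderiv
    rw [hcomp]
    rw [inner_gradient_aux]
    rfl
  rw [hLu, hRu]
  -- B (v₀,0)(0,u) = ⟪∇ℓ s₀, J u⟫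
  have hsplit : B (0, u) (v₀, 0) = B (J u, u) (v₀, 0) - B (J u, 0) (v₀, 0) := by
    have h : ((J u, u) : Euc n × Euc p) = (J u, 0) + (0, u) := by simp
    rw [h, map_add, ContinuousLinearMap.add_apply]
    ring
  have hnud := key2 (J u)
  calc B (v₀, 0) (0, u) = B (0, u) (v₀, 0) := hBsymm _ _
    _ = B (J u, u) (v₀, 0) - B (J u, 0) (v₀, 0) := hsplit
    _ = - B (J u, 0) (v₀, 0) := by rw [key1 u v₀]; ring
    _ = - B (v₀, 0) (J u, 0) := by rw [hBsymm (J u, 0) (v₀, 0)]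
    _ = ⟪gradient ℓ s₀, J u⟫ := by linarith [key2 (J u)]
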